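/- Let a, τ, r be integers with 1 < a ≤ τ and 1 ≤ r < τ. Then the optimal rate of an (a,τ,r) locally recoverable streaming code equals min{(τ+1−a)/(τ+1), r/(r+1)}: (i) every (a,τ,r) LRSC (over any finite field F, any parameters n > k ≥ 1) has rate k/n ≤ min{(τ+1−a)/(τ+1), r/(r+1)}, and (ii) there exist a finite field and an (a,τ,r) LRSC over it whose rate equals min{(τ+1−a)/(τ+1), r/(r+1)}. -/
import Mathlib


/-- A packet-level code with a causal systematic encoder: the parity part of the
coded packet at time `t` is a fixed function of the message packets at times `≤ t`.
The coded packet at time `t` is `c(t) = (m(t), parity m t) ∈ F^n` with `k` message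
symbols and `n - k` parity symbols. -/
structure PacketCode (F : Type) (k n : ℕ) where
  parity : (ℤ → Fin k → F) → ℤ → Fin (n - k) → F
  causal : ∀ (m m' : ℤ → Fin k → F) (t : ℤ),
    (∀ t' ≤ t, m t' = m' t') → parity m t = parity m' t

/-- A valid message stream vanishes at negative times. -/
def IsMsgStream {F : Type} [Zero F] {k : ℕ} (m : ℤ → Fin k → F) : Prop :=
  ∀ t < 0, m t = 0

/-- `(a, τ)` streaming-code property: for every `t ≥ 0` and every erasure set
`E ⊆ {t,…,t+τ}` with `t ∈ E` and `|E| ≤ a`, the message packet `m(t)` is uniquely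
determined by the unerased coded packets in the window together with the past
message packets. -/
def IsSC {F : Type} [Zero F] {k n : ℕ} (C : PacketCode F k n) (a τ : ℕ) : Prop :=
  ∀ m m' : ℤ → Fin k → F, IsMsgStream m → IsMsgStream m' →
    ∀ t : ℤ, 0 ≤ t →
      ∀ E : Finset ℤ, (∀ x ∈ E, t ≤ x ∧ x ≤ t + τ) → t ∈ E → E.card ≤ a →
        (∀ t' < t, m t' = m' t') →
        (∀ t' : ℤ, t ≤ t' → t' ≤ t + τ → t' ∉ E →
          m t' = m' t' ∧ C.parity m t' = C.parity m' t') →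
        m t = m' t

/-- `(a, τ, r)` locally recoverable streaming code: simultaneously an `(a,τ)` SC
and a `(1,r)` SC. -/
def IsLRSC {F : Type} [Zero F] {k n : ℕ} (C : PacketCode F k n) (a τ r : ℕ) : Prop :=
  IsSC C a τ ∧ IsSC C 1 r

namespace LRSCAux

open Finset

/-! ### Converse: counting bound -/

lemma sc_count_bound {F : Type} [Field F] [Fintype F] {k n : ℕ} (C : PacketCode F k n)
    {A w : ℕ} (hA1 : 1 ≤ A) (hAw : A ≤ w + 1) (hsc : IsSC C A w) (N : ℕ) :
    k * (N * A) ≤ (n - k) * (N * (w + 1) + w + 1 - N * A) := by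
  classical
  set W : ℤ := (w : ℤ) + 1 with hW
  have hWpos : 0 < W := by positivity
  set L : ℤ := (N : ℤ) * W with hL
  set P : Finset ℤ := (Finset.Ico (0:ℤ) L).filter (fun x => x % W < (A:ℤ)) with hPdef
  set U : Finset ℤ := (Finset.Icc (0:ℤ) (L + w)) \ P with hUdef
  have hmemP : ∀ x : ℤ, x ∈ P ↔ (0 ≤ x ∧ x < L ∧ x % W < (A:ℤ)) := by
    intro x; simp [hPdef, Finset.mem_filter, Finset.mem_Ico, and_assoc]
  have hPsubIcc : P ⊆ Finset.Icc (0:ℤ) (L + w) := by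
    intro x hx
    rw [hmemP] at hx
    rw [Finset.mem_Icc]
    constructor
    · exact hx.1
    · have := hx.2.1; omega
  -- extension of a partial assignment to a full stream
  let ext : ({x : ℤ // x ∈ P} → Fin k → F) → ℤ → Fin k → F :=
    fun v t => if h : t ∈ P then v ⟨t, h⟩ else 0
  have hext_stream : ∀ v, IsMsgStream (ext v) := by
    intro v t ht
    have : t ∉ P := by
      rw [hmemP]; push_neg; intro h; omega
    simp only [ext, dif_neg this]
  -- key decoding induction
  have key : ∀ v v' : ({x : ℤ // x ∈ P} → Fin k → F),
      (∀ u : {x : ℤ // x ∈ U}, C.parity (ext v) u = C.parity (ext v') u) →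
      ∀ j : ℕ, ∀ x : ℤ, x < (j : ℤ) → ext v x = ext v' x := by
    intro v v' hpar j
    induction j with
    | zero =>
      intro x hx
      have hx' : x ∉ P := by rw [hmemP]; push_neg; intro h; omega
      simp only [ext, dif_neg hx']
    | succ j ih =>
      intro x hx
      rcases lt_or_ge x (j : ℤ) with h | h
      · exact ih x h
      have hxj : x = (j : ℤ) := by push_cast at hx ⊢; omega
      by_cases hxP : x ∈ P
      · -- decode via the SC property
        have hx0 : (0:ℤ) ≤ x := ((hmemP x).1 hxP).1
        have hxL : x < L := ((hmemP x).1 hxP).2.1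
        set E : Finset ℤ := (Finset.Icc x (x + w)).filter (fun y => y ∈ P) with hE
        have hEsub : ∀ y ∈ E, x ≤ y ∧ y ≤ x + w := by
          intro y hy
          have := (Finset.mem_filter.1 hy).1
          exact Finset.mem_Icc.1 this
        have hxE : x ∈ E := by
          rw [hE, Finset.mem_filter, Finset.mem_Icc]
          exact ⟨⟨le_refl _, by omega⟩, hxP⟩
        have hcardE : E.card ≤ A := by
          have hmaps : ∀ y ∈ E, y % W ∈ Finset.Ico (0:ℤ) (A:ℤ) := by
            intro y hy
            have hyP := (Finset.mem_filter.1 hy).2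
            rw [hmemP] at hyP
            rw [Finset.mem_Ico]
            exact ⟨Int.emod_nonneg _ (by omega), hyP.2.2⟩
          have hinj : Set.InjOn (fun y : ℤ => y % W) E := by
            intro y hy z hz hyz
            have hy' := hEsub y hy
            have hz' := hEsub z hz
            have hdvd : W ∣ z - y := Int.ModEq.dvd (by simpa [Int.ModEq] using hyz)
            have : z - y = 0 := Int.eq_zero_of_abs_lt_dvd hdvd (by
              rw [abs_lt]; constructor <;> omega)
            omega
          calc E.card ≤ (Finset.Ico (0:ℤ) (A:ℤ)).card :=
                Finset.card_le_card_of_injOn _ hmaps hinj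
            _ = A := by rw [Int.card_Ico]; simp
        have hconc := hsc (ext v) (ext v') (hext_stream v) (hext_stream v') x hx0 E hEsub hxE
          hcardE
          (by -- past agreement
            intro t' ht'
            by_cases h' : t' ∈ P
            · have ht'0 : (0:ℤ) ≤ t' := ((hmemP t').1 h').1
              exact ih t' (by omega)
            · simp only [ext, dif_neg h'])
          (by -- unerased agreement
            intro t' h1 h2 h3
            have ht'P : t' ∉ P := by
              intro hc
              exact h3 (by rw [hE, Finset.mem_filter, Finset.mem_Icc]; exact ⟨⟨h1, h2⟩, hc⟩)
            constructor
            · simp only [ext, dif_neg ht'P]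
            · have ht'U : t' ∈ U := by
                rw [hUdef, Finset.mem_sdiff, Finset.mem_Icc]
                exact ⟨⟨by omega, by omega⟩, ht'P⟩
              exact hpar ⟨t', ht'U⟩)
        exact hconc
      · simp only [ext, dif_neg hxP]
  -- injectivity of the parity map
  have hinj : Function.Injective
      (fun v : ({x : ℤ // x ∈ P} → Fin k → F) => (fun u : {x : ℤ // x ∈ U} => C.parity (ext v) u)) := by
    intro v v' heq
    have hpar : ∀ u : {x : ℤ // x ∈ U}, C.parity (ext v) u = C.parity (ext v') u := by
      intro u; exact congrFun heq u
    funext x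
    obtain ⟨x, hxmem⟩ := x
    have hx0 : (0:ℤ) ≤ x := ((hmemP x).1 hxmem).1
    have hextEq : ext v x = ext v' x := by
      refine key v v' hpar (x.toNat + 1) x ?_
      push_cast
      omega
    simpa only [ext, dif_pos hxmem] using hextEq
  -- cardinalities
  have cardP : P.card = N * A := by
    have himg : P = (Finset.range N ×ˢ Finset.range A).image
        (fun qs => (qs.1 : ℤ) * W + (qs.2 : ℤ)) := by
      ext x
      simp only [Finset.mem_image, Finset.mem_product, Finset.mem_range, hmemP]
      constructor
      · rintro ⟨hx0, hxL, hmod⟩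
        refine ⟨((x / W).toNat, (x % W).toNat), ⟨?_, ?_⟩, ?_⟩
        · have hq0 : 0 ≤ x / W := Int.ediv_nonneg hx0 (by omega)
          have hqN : x / W < (N : ℤ) := by
            by_contra hcon
            push_neg at hcon
            have h1 : W * (N:ℤ) ≤ W * (x / W) := mul_le_mul_of_nonneg_left hcon (le_of_lt hWpos)
            have h2 := Int.mul_ediv_add_emod x W
            have h3 : 0 ≤ x % W := Int.emod_nonneg _ (by omega)
            have : (N:ℤ) * W ≤ x := by nlinarith
            rw [hL] at hxL
            omega
          omega
        · have h0 : 0 ≤ x % W := Int.emod_nonneg _ (by omega)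
          omega
        · have h0 : 0 ≤ x % W := Int.emod_nonneg _ (by omega)
          have hq0 : 0 ≤ x / W := Int.ediv_nonneg hx0 (by omega)
          have := Int.mul_ediv_add_emod x W
          push_cast
          rw [Int.toNat_of_nonneg hq0, Int.toNat_of_nonneg h0]
          linarith
      · rintro ⟨⟨q, s⟩, ⟨hq, hs⟩, rfl⟩
        have hsW : (s : ℤ) < W := by
          have : (A : ℤ) ≤ W := by rw [hW]; exact_mod_cast hAw
          have : (s : ℤ) < (A:ℤ) := by exact_mod_cast hs
          omega
        have hmod : ((q:ℤ) * W + (s:ℤ)) % W = (s:ℤ) := by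
          rw [add_comm, Int.add_mul_emod_self_right]
          exact Int.emod_eq_of_lt (by positivity) hsW
        refine ⟨by positivity, ?_, ?_⟩
        · have hq1 : (q:ℤ) + 1 ≤ (N:ℤ) := by exact_mod_cast hq
          calc (q:ℤ) * W + (s:ℤ) < (q:ℤ) * W + W := by omega
            _ = ((q:ℤ) + 1) * W := by ring
            _ ≤ (N:ℤ) * W := by
                apply mul_le_mul_of_nonneg_right hq1 (le_of_lt hWpos)
        · rw [hmod]; exact_mod_cast hs
    have hinjOn : Set.InjOn (fun qs : ℕ × ℕ => (qs.1 : ℤ) * W + (qs.2 : ℤ))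
        ((Finset.range N ×ˢ Finset.range A) : Finset (ℕ × ℕ)) := by
      intro y hy z hz hyz
      simp only [Finset.mem_coe, Finset.mem_product, Finset.mem_range] at hy hz
      have hyW : ((y.2 : ℤ)) < W := by
        have : (A : ℤ) ≤ W := by rw [hW]; exact_mod_cast hAw
        have : ((y.2:ℕ) : ℤ) < (A:ℤ) := by exact_mod_cast hy.2
        omega
      have hzW : ((z.2 : ℤ)) < W := by
        have : (A : ℤ) ≤ W := by rw [hW]; exact_mod_cast hAw
        have : ((z.2:ℕ) : ℤ) < (A:ℤ) := by exact_mod_cast hz.2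
        omega
      have hmody : ((y.1:ℤ) * W + (y.2:ℤ)) % W = (y.2:ℤ) := by
        rw [add_comm, Int.add_mul_emod_self_right]
        exact Int.emod_eq_of_lt (by positivity) hyW
      have hmodz : ((z.1:ℤ) * W + (z.2:ℤ)) % W = (z.2:ℤ) := by
        rw [add_comm, Int.add_mul_emod_self_right]
        exact Int.emod_eq_of_lt (by positivity) hzW
      have hyz' : (y.1:ℤ) * W + (y.2:ℤ) = (z.1:ℤ) * W + (z.2:ℤ) := hyz
      have h2 : (y.2 : ℤ) = (z.2 : ℤ) := by
        rw [← hmody, ← hmodz, hyz']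
      have h1 : (y.1 : ℤ) = (z.1 : ℤ) := by
        have : (y.1:ℤ) * W = (z.1:ℤ) * W := by linarith
        exact mul_right_cancel₀ (by omega) this
      have : y.1 = z.1 := by exact_mod_cast h1
      have h2' : y.2 = z.2 := by exact_mod_cast h2
      exact Prod.ext this h2'
    rw [himg, Finset.card_image_of_injOn hinjOn]
    simp
  have cardU : U.card = N * (w + 1) + w + 1 - N * A := by
    have harg : L + (w:ℤ) + 1 - 0 = ((N * (w + 1) + w + 1 : ℕ) : ℤ) := by
      rw [hL, hW]; push_cast; ring
    rw [hUdef, Finset.card_sdiff_of_subset hPsubIcc, Int.card_Icc, cardP, harg, Int.toNat_natCast]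
  -- compare cardinalities of function spaces
  have hcard := Fintype.card_le_of_injective _ hinj
  have hcard1 : Fintype.card ({x : ℤ // x ∈ P} → Fin k → F) =
      Fintype.card F ^ (k * P.card) := by
    rw [Fintype.card_fun, Fintype.card_fun, Fintype.card_fin, Fintype.card_coe, ← pow_mul]
  have hcard2 : Fintype.card ({x : ℤ // x ∈ U} → Fin (n - k) → F) =
      Fintype.card F ^ ((n - k) * U.card) := by
    rw [Fintype.card_fun, Fintype.card_fun, Fintype.card_fin, Fintype.card_coe, ← pow_mul]
  rw [hcard1, hcard2] at hcard
  have hF : 1 < Fintype.card F := Fintype.one_lt_card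
  have hexp : k * P.card ≤ (n - k) * U.card := by
    exact (pow_le_pow_iff_right₀ hF).1 hcard
  rw [cardP, cardU] at hexp
  exact hexp

lemma sc_nat_bound {F : Type} [Field F] [Fintype F] {k n : ℕ} (C : PacketCode F k n)
    {A w : ℕ} (hA1 : 1 ≤ A) (hAw : A ≤ w + 1) (hsc : IsSC C A w) :
    k * A ≤ (n - k) * (w + 1 - A) := by
  by_contra hlt
  push_neg at hlt
  set X := (n - k) * (w + 1 - A) with hX
  set c := (n - k) * (w + 1) with hc
  have hbound := sc_count_bound C hA1 hAw hsc (c + 1)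
  set N := c + 1 with hN
  have hsplit : N * (w + 1) + w + 1 - N * A = N * (w + 1 - A) + (w + 1) := by
    have h1 : N * (w + 1 - A) + N * A = N * (w + 1) := by
      rw [← Nat.mul_add]
      congr 1
      omega
    omega
  rw [hsplit, Nat.mul_add] at hbound
  have h2 : (n - k) * (N * (w + 1 - A)) = N * X := by rw [hX]; ring
  have h3 : k * (N * A) = N * (k * A) := by ring
  have h4 : N * (X + 1) ≤ N * (k * A) := Nat.mul_le_mul_left N hlt
  have h5 : N * (X + 1) = N * X + N := by ring
  omega

lemma sc_rate_bound {F : Type} [Field F] [Fintype F] {k n : ℕ} (C : PacketCode F k n)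
    {A w : ℕ} (hA1 : 1 ≤ A) (hAw : A ≤ w + 1) (hsc : IsSC C A w) (hk : 1 ≤ k) (hkn : k < n) :
    (k : ℚ) / n ≤ ((w : ℚ) + 1 - A) / ((w : ℚ) + 1) := by
  have hnat : k * (w + 1) ≤ n * (w + 1 - A) := by
    have h0 := sc_nat_bound C hA1 hAw hsc
    have e1 : k * (w + 1 - A) + k * A = k * (w + 1) := by
      rw [← Nat.mul_add]; congr 1; omega
    have e2 : k * (w + 1 - A) + (n - k) * (w + 1 - A) = n * (w + 1 - A) := by
      rw [← Nat.add_mul]; congr 1; omega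
    omega
  have hn0 : (0:ℚ) < (n:ℚ) := by
    have : 0 < n := lt_of_le_of_lt (Nat.zero_le k) hkn
    exact_mod_cast this
  have hw0 : (0:ℚ) < (w:ℚ) + 1 := by positivity
  rw [div_le_div_iff₀ hn0 hw0]
  have : ((k * (w + 1) : ℕ) : ℚ) ≤ ((n * (w + 1 - A) : ℕ) : ℚ) := by exact_mod_cast hnat
  push_cast [Nat.cast_sub hAw] at this
  linarith



open Finset

lemma sum_two_pow_lt {n : ℕ} {s : Finset ℕ} (h : ∀ x ∈ s, x < n) :
    (∑ x ∈ s, 2 ^ x) < 2 ^ n := by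
  induction n generalizing s with
  | zero =>
    have hs : s = ∅ := Finset.eq_empty_of_forall_notMem (fun x hx => by have := h x hx; omega)
    simp [hs]
  | succ n ih =>
    by_cases hn : n ∈ s
    · have hs : s = insert n (s.erase n) := (Finset.insert_erase hn).symm
      rw [hs, Finset.sum_insert (Finset.notMem_erase _ _)]
      have h2 := ih (s := s.erase n) (fun x hx => by
        have h3 := h x (Finset.mem_of_mem_erase hx)
        have h4 := Finset.ne_of_mem_erase hx
        omega)
      have h5 : (2:ℕ)^(n+1) = 2^n + 2^n := by ring
      omega
    · have h2 := ih (s := s) (fun x hx => by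
        have h3 := h x hx
        have h4 : x ≠ n := fun hxe => hn (hxe ▸ hx)
        omega)
      have h5 : (2:ℕ)^n ≤ 2^(n+1) := Nat.pow_le_pow_right (by norm_num) (by omega)
      omega

lemma sum_two_pow_inj : ∀ {n : ℕ} {s t : Finset ℕ}, (∀ x ∈ s, x < n) → (∀ x ∈ t, x < n) →
    (∑ x ∈ s, 2 ^ x) = (∑ x ∈ t, 2 ^ x) → s = t := by
  intro n
  induction n with
  | zero =>
    intro s t hs ht _
    have h1 : s = ∅ := Finset.eq_empty_of_forall_notMem (fun x hx => by have := hs x hx; omega)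
    have h2 : t = ∅ := Finset.eq_empty_of_forall_notMem (fun x hx => by have := ht x hx; omega)
    rw [h1, h2]
  | succ n ih =>
    intro s t hs ht heq
    have hbound : ∀ (u : Finset ℕ), (∀ x ∈ u, x < n + 1) → n ∉ u → ∀ x ∈ u, x < n := by
      intro u hu hnu x hx
      have h1 := hu x hx
      have h2 : x ≠ n := fun hxe => hnu (hxe ▸ hx)
      omega
    by_cases h1 : n ∈ s <;> by_cases h2 : n ∈ t
    · have es : s = insert n (s.erase n) := (Finset.insert_erase h1).symm
      have et : t = insert n (t.erase n) := (Finset.insert_erase h2).symm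
      rw [es, Finset.sum_insert (Finset.notMem_erase _ _), et,
        Finset.sum_insert (Finset.notMem_erase _ _)] at heq
      have heq' : (∑ x ∈ s.erase n, 2 ^ x) = ∑ x ∈ t.erase n, 2 ^ x := by omega
      have hrec := ih (s := s.erase n) (t := t.erase n)
        (fun x hx => by
          have h3 := hs x (Finset.mem_of_mem_erase hx)
          have h4 := Finset.ne_of_mem_erase hx
          omega)
        (fun x hx => by
          have h3 := ht x (Finset.mem_of_mem_erase hx)
          have h4 := Finset.ne_of_mem_erase hx
          omega) heq'
      rw [es, et, hrec]
    · exfalso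
      have hlt : (∑ x ∈ t, 2 ^ x) < 2 ^ n := sum_two_pow_lt (hbound t ht h2)
      have hge : (2:ℕ)^n ≤ ∑ x ∈ s, 2 ^ x :=
        Finset.single_le_sum (f := fun x => (2:ℕ)^x) (fun i _ => Nat.zero_le _) h1
      omega
    · exfalso
      have hlt : (∑ x ∈ s, 2 ^ x) < 2 ^ n := sum_two_pow_lt (hbound s hs h1)
      have hge : (2:ℕ)^n ≤ ∑ x ∈ t, 2 ^ x :=
        Finset.single_le_sum (f := fun x => (2:ℕ)^x) (fun i _ => Nat.zero_le _) h2
      omega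
    · exact ih (hbound s hs h1) (hbound t ht h2) heq

/-- Determinant dominance: a matrix whose nonzero entries are powers `B^(2^g)` with
globally distinct `g`-values on its support, containing the diagonal, has nonzero
determinant, bounded in absolute value. -/
lemma det_dominant {κ : Type} [Fintype κ] [DecidableEq κ] [Nonempty κ]
    (Bb Gb : ℕ) (g : κ × κ → ℕ) (supp : κ → κ → Prop) [∀ c c', Decidable (supp c c')]
    (hginj : ∀ x y : κ × κ, supp x.1 x.2 → supp y.1 y.2 → g x = g y → x = y)
    (hgb : ∀ x : κ × κ, g x < Gb)
    (hB : (Fintype.card κ).factorial + 2 ≤ Bb)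
    (hdiag : ∀ c, supp c c)
    (M : Matrix κ κ ℤ)
    (hM1 : ∀ c c', supp c c' → M c c' = (Bb:ℤ) ^ (2 ^ g (c, c')))
    (hM0 : ∀ c c', ¬ supp c c' → M c c' = 0) :
    M.det ≠ 0 ∧ |M.det| ≤ (Fintype.card κ).factorial * (Bb:ℤ) ^ (2 ^ Gb) := by
  classical
  set q := Fintype.card κ with hq
  have hB2 : (2:ℕ) ≤ Bb := by
    have := Nat.one_le_iff_ne_zero.2 (Nat.factorial_ne_zero q)
    omega
  have hBZ : (2:ℤ) ≤ (Bb:ℤ) := by exact_mod_cast hB2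
  set A := Finset.univ.filter (fun π : Equiv.Perm κ => ∀ c, supp (π c) c) with hA
  have hid : (1 : Equiv.Perm κ) ∈ A := by
    rw [hA, Finset.mem_filter]
    exact ⟨Finset.mem_univ _, fun c => hdiag c⟩
  set S : Equiv.Perm κ → ℕ := fun π => ∑ c, 2 ^ (g (π c, c)) with hS
  have hSpos : ∀ π, 1 ≤ S π := by
    intro π
    rw [hS]
    obtain ⟨c⟩ := ‹Nonempty κ›
    calc 1 ≤ 2 ^ (g (π c, c)) := Nat.one_le_two_pow
      _ ≤ ∑ c, 2 ^ (g (π c, c)) :=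
        Finset.single_le_sum (f := fun c => 2 ^ (g (π c, c))) (fun i _ => Nat.zero_le _)
          (Finset.mem_univ c)
  have hprod : ∀ π ∈ A, (∏ c, M (π c) c) = (Bb:ℤ) ^ S π := by
    intro π hπ
    have hπ' := (Finset.mem_filter.1 hπ).2
    calc (∏ c, M (π c) c) = ∏ c, (Bb:ℤ) ^ (2 ^ g (π c, c)) :=
          Finset.prod_congr rfl (fun c _ => hM1 _ _ (hπ' c))
      _ = (Bb:ℤ) ^ (∑ c, 2 ^ g (π c, c)) := by rw [Finset.prod_pow_eq_pow_sum]
  -- injectivity of `c ↦ g (π c, c)` for admissible π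
  have hgc : ∀ π ∈ A, ∀ x ∈ Finset.univ, ∀ y ∈ Finset.univ,
      g (π x, x) = g (π y, y) → x = y := by
    intro π hπ x _ y _ hxy
    have hπ' := (Finset.mem_filter.1 hπ).2
    have := hginj (π x, x) (π y, y) (hπ' x) (hπ' y) hxy
    exact (Prod.ext_iff.1 this).2
  have hSimg : ∀ π ∈ A, S π = ∑ x ∈ Finset.univ.image (fun c => g (π c, c)), 2 ^ x := by
    intro π hπ
    rw [hS, Finset.sum_image (hgc π hπ)]
  have hSinj : ∀ π ∈ A, ∀ π' ∈ A, S π = S π' → π = π' := by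
    intro π hπ π' hπ' hSS
    have hπ2 := (Finset.mem_filter.1 hπ).2
    have hπ'2 := (Finset.mem_filter.1 hπ').2
    have himg : Finset.univ.image (fun c => g (π c, c)) =
        Finset.univ.image (fun c => g (π' c, c)) := by
      apply sum_two_pow_inj (n := Gb)
      · intro x hx
        obtain ⟨c, _, rfl⟩ := Finset.mem_image.1 hx
        exact hgb _
      · intro x hx
        obtain ⟨c, _, rfl⟩ := Finset.mem_image.1 hx
        exact hgb _
      · rw [← hSimg π hπ, ← hSimg π' hπ', hSS]
    apply Equiv.ext
    intro c
    have hmem : g (π' c, c) ∈ Finset.univ.image (fun c => g (π c, c)) := by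
      rw [himg]
      exact Finset.mem_image_of_mem _ (Finset.mem_univ c)
    obtain ⟨c0, _, hc0⟩ := Finset.mem_image.1 hmem
    have := hginj (π c0, c0) (π' c, c) (hπ2 c0) (hπ'2 c) hc0
    obtain ⟨h1, h2⟩ := Prod.ext_iff.1 this
    simp only at h1 h2
    rw [← h1, h2]
  -- determinant as a sum over admissible permutations
  have hdet : M.det = ∑ π ∈ A, (Equiv.Perm.sign π : ℤ) * ∏ c, M (π c) c := by
    rw [Matrix.det_apply]
    rw [← Finset.sum_subset (Finset.subset_univ A)]
    · apply Finset.sum_congr rfl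
      intro π _
      simp [Units.smul_def]
    · intro π _ hπ
      rw [hA, Finset.mem_filter] at hπ
      push_neg at hπ
      obtain ⟨c, hc⟩ := hπ (Finset.mem_univ π)
      have hzero : (∏ c : κ, M (π c) c) = 0 :=
        Finset.prod_eq_zero (Finset.mem_univ c) (hM0 _ _ hc)
      simp [Units.smul_def, hzero]
  -- the maximal admissible permutation
  obtain ⟨πm, hπmA, hmax⟩ := Finset.exists_max_image A S ⟨1, hid⟩
  have habs : ∀ π ∈ A, |(Equiv.Perm.sign π : ℤ) * ∏ c, M (π c) c| = (Bb:ℤ) ^ S π := by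
    intro π hπ
    rw [abs_mul, hprod π hπ]
    have hsign : |((Equiv.Perm.sign π : ℤˣ) : ℤ)| = 1 := by
      rcases Int.units_eq_one_or (Equiv.Perm.sign π) with h | h <;> rw [h] <;> simp
    rw [hsign, one_mul, abs_pow, abs_of_nonneg (by positivity : (0:ℤ) ≤ (Bb:ℤ))]
  have hother : ∀ π ∈ A.erase πm,
      |(Equiv.Perm.sign π : ℤ) * ∏ c, M (π c) c| ≤ (Bb:ℤ) ^ (S πm - 1) := by
    intro π hπe
    have hπA := Finset.mem_of_mem_erase hπe
    have hne := Finset.ne_of_mem_erase hπe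
    have hle : S π ≤ S πm := hmax π hπA
    have hlt : S π < S πm := lt_of_le_of_ne hle (fun h => hne (hSinj π hπA πm hπmA h))
    rw [habs π hπA]
    apply pow_le_pow_right₀ (by omega)
    omega
  have hcardA : A.card ≤ q.factorial := by
    calc A.card ≤ (Finset.univ : Finset (Equiv.Perm κ)).card := Finset.card_le_univ A
      _ = q.factorial := by rw [Finset.card_univ, Fintype.card_perm]
  constructor
  · -- nonzero
    intro hzero
    rw [← Finset.add_sum_erase A _ hπmA] at hdet
    rw [hdet] at hzero
    have hmain : |(Equiv.Perm.sign πm : ℤ) * ∏ c, M (πm c) c| = (Bb:ℤ) ^ S πm :=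
      habs πm hπmA
    have hsum : |∑ π ∈ A.erase πm, (Equiv.Perm.sign π : ℤ) * ∏ c, M (π c) c| ≤
        ((A.erase πm).card : ℤ) * (Bb:ℤ) ^ (S πm - 1) := by
      calc |∑ π ∈ A.erase πm, (Equiv.Perm.sign π : ℤ) * ∏ c, M (π c) c|
          ≤ ∑ π ∈ A.erase πm, |(Equiv.Perm.sign π : ℤ) * ∏ c, M (π c) c| :=
            Finset.abs_sum_le_sum_abs _ _
        _ ≤ ∑ _π ∈ A.erase πm, (Bb:ℤ) ^ (S πm - 1) := Finset.sum_le_sum hother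
        _ = ((A.erase πm).card : ℤ) * (Bb:ℤ) ^ (S πm - 1) := by
            rw [Finset.sum_const, nsmul_eq_mul]
    have heq : (Equiv.Perm.sign πm : ℤ) * ∏ c, M (πm c) c =
        - ∑ π ∈ A.erase πm, (Equiv.Perm.sign π : ℤ) * ∏ c, M (π c) c := by linarith
    have hcard2 : ((A.erase πm).card : ℤ) ≤ (q.factorial : ℤ) - 1 := by
      have h1 : (A.erase πm).card = A.card - 1 := Finset.card_erase_of_mem hπmA
      have h2 : 1 ≤ A.card := Finset.card_pos.2 ⟨πm, hπmA⟩
      have := hcardA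
      omega
    have hBpow : (0:ℤ) < (Bb:ℤ) ^ (S πm - 1) := by positivity
    have hfinal : (Bb:ℤ) ^ S πm ≤ ((q.factorial : ℤ) - 1) * (Bb:ℤ) ^ (S πm - 1) := by
      calc (Bb:ℤ) ^ S πm = |(Equiv.Perm.sign πm : ℤ) * ∏ c, M (πm c) c| := hmain.symm
        _ = |∑ π ∈ A.erase πm, (Equiv.Perm.sign π : ℤ) * ∏ c, M (π c) c| := by
            rw [heq, abs_neg]
        _ ≤ ((A.erase πm).card : ℤ) * (Bb:ℤ) ^ (S πm - 1) := hsum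
        _ ≤ ((q.factorial : ℤ) - 1) * (Bb:ℤ) ^ (S πm - 1) := by
            apply mul_le_mul_of_nonneg_right hcard2 (le_of_lt hBpow)
    have hexpand : (Bb:ℤ) ^ S πm = (Bb:ℤ) ^ (S πm - 1) * (Bb:ℤ) := by
      rw [← pow_succ]
      congr 1
      have := hSpos πm
      omega
    have hBq : (q.factorial : ℤ) + 2 ≤ (Bb:ℤ) := by exact_mod_cast hB
    nlinarith
  · -- bound
    rw [hdet]
    calc |∑ π ∈ A, (Equiv.Perm.sign π : ℤ) * ∏ c, M (π c) c|
        ≤ ∑ π ∈ A, |(Equiv.Perm.sign π : ℤ) * ∏ c, M (π c) c| :=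
          Finset.abs_sum_le_sum_abs _ _
      _ ≤ ∑ _π ∈ A, (Bb:ℤ) ^ (2 ^ Gb) := by
          apply Finset.sum_le_sum
          intro π hπ
          rw [habs π hπ]
          apply pow_le_pow_right₀ (by omega)
          have : S π < 2 ^ Gb := by
            rw [hSimg π hπ]
            apply sum_two_pow_lt
            intro x hx
            obtain ⟨c, _, rfl⟩ := Finset.mem_image.1 hx
            exact hgb _
          omega
      _ = (A.card : ℤ) * (Bb:ℤ) ^ (2 ^ Gb) := by rw [Finset.sum_const, nsmul_eq_mul]
      _ ≤ (q.factorial : ℤ) * (Bb:ℤ) ^ (2 ^ Gb) := by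
          apply mul_le_mul_of_nonneg_right _ (by positivity)
          exact_mod_cast hcardA


/-! ### The code construction -/

/-- Injective encoding of coefficient variable indices. -/
def ivar {T aa K : ℕ} (v : Fin T × Fin aa × Fin T × Fin K) : ℕ :=
  (finProdFinEquiv (finProdFinEquiv (finProdFinEquiv (v.1, v.2.1), v.2.2.1), v.2.2.2)).val

lemma ivar_lt {T aa K : ℕ} (v : Fin T × Fin aa × Fin T × Fin K) :
    ivar v < T * aa * T * K :=
  (finProdFinEquiv (finProdFinEquiv (finProdFinEquiv (v.1, v.2.1), v.2.2.1), v.2.2.2)).isLt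

lemma ivar_inj {T aa K : ℕ} : Function.Injective (ivar (T := T) (aa := aa) (K := K)) := by
  intro x y h
  obtain ⟨x1, x2, x3, x4⟩ := x
  obtain ⟨y1, y2, y3, y4⟩ := y
  have h1 : (finProdFinEquiv (finProdFinEquiv (finProdFinEquiv (x1, x2), x3), x4)) =
      (finProdFinEquiv (finProdFinEquiv (finProdFinEquiv (y1, y2), y3), y4)) := by
    apply Fin.val_injective
    exact h
  have h2 := finProdFinEquiv.injective h1
  rw [Prod.mk.injEq] at h2
  have h3 := finProdFinEquiv.injective h2.1
  rw [Prod.mk.injEq] at h3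
  have h4 := finProdFinEquiv.injective h3.1
  rw [Prod.mk.injEq] at h4
  simp [h4.1, h4.2, h3.2, h2.2]

/-- Residue of an integer time modulo `T`. -/
def rhoT (T : ℕ) (hT : 0 < T) (u : ℤ) : Fin T :=
  ⟨(u % (T : ℤ)).toNat, by
    have h1 : 0 ≤ u % (T : ℤ) := Int.emod_nonneg _ (by exact_mod_cast hT.ne')
    have h2 : u % (T : ℤ) < (T : ℤ) := Int.emod_lt_of_pos _ (by exact_mod_cast hT)
    omega⟩

lemma rhoT_inj {T : ℕ} (hT : 0 < T) {u u' : ℤ} (h : rhoT T hT u = rhoT T hT u')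
    (hd : |u - u'| < (T : ℤ)) : u = u' := by
  have h1 : (u % (T : ℤ)).toNat = (u' % (T : ℤ)).toNat := congrArg Fin.val h
  have h2 : 0 ≤ u % (T : ℤ) := Int.emod_nonneg _ (by exact_mod_cast hT.ne')
  have h3 : 0 ≤ u' % (T : ℤ) := Int.emod_nonneg _ (by exact_mod_cast hT.ne')
  have h4 : u % (T : ℤ) = u' % (T : ℤ) := by omega
  have h5 : ((T : ℤ)) ∣ u' - u := Int.ModEq.dvd h4
  have h6 : u' - u = 0 := Int.eq_zero_of_abs_lt_dvd h5 (by rw [abs_sub_comm]; exact hd)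
  omega

/-- The coefficient base. -/
def Bco (a K : ℕ) : ℕ := (a * K).factorial + 2

/-- The coefficients of the code, as integers. -/
def gamZ (a K τc : ℕ) (ρ : Fin (τc + 1)) (l : Fin a) (d : Fin (τc + 1)) (i : Fin K) : ℤ :=
  (Bco a K : ℤ) ^ (2 ^ ivar (ρ, l, d, i))

/-- The parity function of the constructed code. -/
def theParity (p a K τc : ℕ) (m : ℤ → Fin K → ZMod p) (u : ℤ)
    (l : Fin (K + a - K)) : ZMod p :=
  ∑ d : Fin τc, ∑ i : Fin K,
    ((gamZ a K τc (rhoT (τc + 1) (Nat.succ_pos τc) u)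
        (Fin.cast (Nat.add_sub_cancel_left K a) l)
        (Fin.castLE (Nat.le_succ τc) d) i : ℤ) : ZMod p) * m (u - ((d : ℕ) + 1)) i

/-- The constructed locally recoverable streaming code. -/
def theCode (p a K τc : ℕ) : PacketCode (ZMod p) K (K + a) where
  parity := theParity p a K τc
  causal := by
    intro m m' t h
    funext l
    unfold theParity
    apply Finset.sum_congr rfl
    intro d _
    apply Finset.sum_congr rfl
    intro i _
    have hagree : m (t - ((d : ℕ) + 1)) = m' (t - ((d : ℕ) + 1)) := by
      apply h
      have : (0 : ℤ) < (d : ℕ) + 1 := by positivity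
      omega
    rw [hagree]

lemma theParity_sub (p a K τc : ℕ) (m m' : ℤ → Fin K → ZMod p) (u : ℤ)
    (l : Fin (K + a - K)) :
    theParity p a K τc (fun s i => m s i - m' s i) u l =
      theParity p a K τc m u l - theParity p a K τc m' u l := by
  unfold theParity
  rw [← Finset.sum_sub_distrib]
  apply Finset.sum_congr rfl
  intro d _
  rw [← Finset.sum_sub_distrib]
  apply Finset.sum_congr rfl
  intro i _
  rw [← mul_sub]

/-- Existence of a cut point for the Hall condition (argmax argument). -/
lemma exists_cut (a τc : ℕ) (ha : 0 < a) (t : ℤ) (E : Finset ℤ)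
    (hE : ∀ x ∈ E, t ≤ x ∧ x ≤ t + τc) (hcard : E.card ≤ a) :
    ∃ Θ : ℤ, t < Θ ∧ Θ ≤ t + τc + 1 ∧
      ∀ e ∈ E, e < Θ →
        (τc + 1) * ((E.filter (fun x => e ≤ x ∧ x < Θ)).card) ≤ a * (Θ - e).toNat := by
  classical
  set T : ℤ := (τc : ℤ) + 1 with hTdef
  set g : ℤ → ℤ := fun x => (a : ℤ) * (x - t) - T * ((E.filter (fun y => y < x)).card : ℤ)
    with hg
  have hne : (Finset.Icc (t + 1) (t + T)).Nonempty := ⟨t + 1, by rw [Finset.mem_Icc]; omega⟩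
  obtain ⟨Θ, hΘmem, hΘmax⟩ := Finset.exists_max_image (Finset.Icc (t + 1) (t + T)) g hne
  rw [Finset.mem_Icc] at hΘmem
  have hcut0 : g (t + T) ≤ g Θ := hΘmax _ (by rw [Finset.mem_Icc]; omega)
  have hgtT : 0 ≤ g (t + T) := by
    rw [hg]
    simp only
    have h1 : ((E.filter (fun y => y < t + T)).card : ℤ) ≤ (a : ℤ) := by
      have := Finset.card_filter_le E (fun y => y < t + T)
      have h2 : (E.filter (fun y => y < t + T)).card ≤ a := le_trans this hcard
      exact_mod_cast h2
    nlinarith [h1, show (0:ℤ) < T by omega]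
  refine ⟨Θ, by omega, by omega, ?_⟩
  intro e heE heΘ
  have heT : t ≤ e := (hE e heE).1
  -- split the count
  have hsplit : (E.filter (fun y => y < Θ)).card =
      (E.filter (fun y => y < e)).card + (E.filter (fun x => e ≤ x ∧ x < Θ)).card := by
    rw [← Finset.card_filter_add_card_filter_not
      (s := E.filter (fun y => y < Θ)) (p := fun y => y < e)]
    congr 1
    · congr 1
      ext x
      simp only [Finset.mem_filter]
      constructor
      · rintro ⟨⟨hx1, _⟩, hx3⟩; exact ⟨hx1, hx3⟩
      · rintro ⟨hx1, hx3⟩; exact ⟨⟨hx1, by omega⟩, hx3⟩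
    · congr 1
      ext x
      simp only [Finset.mem_filter]
      constructor
      · rintro ⟨⟨hx1, hx2⟩, hx3⟩; push_neg at hx3; exact ⟨hx1, hx3, hx2⟩
      · rintro ⟨hx1, hx2, hx3⟩; exact ⟨⟨hx1, hx3⟩, by omega⟩
  have hmain : (a : ℤ) * (Θ - e) - T * ((E.filter (fun x => e ≤ x ∧ x < Θ)).card : ℤ) ≥ 0 := by
    rcases eq_or_lt_of_le heT with heq | hlt
    · -- e = t
      have hzero : (E.filter (fun y => y < e)).card = 0 := by
        rw [Finset.card_eq_zero]
        apply Finset.filter_false_of_mem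
        intro x hx
        have := (hE x hx).1
        omega
      have hgΘ : 0 ≤ g Θ := le_trans hgtT hcut0
      rw [hg] at hgΘ
      simp only at hgΘ
      have hcount : ((E.filter (fun y => y < Θ)).card : ℤ) =
          ((E.filter (fun x => e ≤ x ∧ x < Θ)).card : ℤ) := by
        rw [hsplit, hzero]; push_cast; ring
      have h7 : T * ((E.filter (fun y => y < Θ)).card : ℤ) =
          T * ((E.filter (fun x => e ≤ x ∧ x < Θ)).card : ℤ) := by rw [hcount]
      have h8 : (a : ℤ) * (Θ - e) = (a : ℤ) * (Θ - t) := by rw [← heq]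
      omega
    · -- t < e
      have hge : g e ≤ g Θ := hΘmax e (by rw [Finset.mem_Icc]; omega)
      rw [hg] at hge
      simp only at hge
      have hcount : ((E.filter (fun y => y < Θ)).card : ℤ) =
          ((E.filter (fun y => y < e)).card : ℤ) +
          ((E.filter (fun x => e ≤ x ∧ x < Θ)).card : ℤ) := by
        rw [hsplit]; push_cast; ring
      have h7 : T * ((E.filter (fun y => y < Θ)).card : ℤ) =
          T * ((E.filter (fun y => y < e)).card : ℤ) +
          T * ((E.filter (fun x => e ≤ x ∧ x < Θ)).card : ℤ) := by rw [hcount]; ring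
      have h8 : (a : ℤ) * (Θ - t) = (a : ℤ) * (Θ - e) + (a : ℤ) * (e - t) := by ring
      omega
  have htoNat : ((Θ - e).toNat : ℤ) = Θ - e := Int.toNat_of_nonneg (by omega)
  have : ((τc + 1 : ℕ) : ℤ) * ((E.filter (fun x => e ≤ x ∧ x < Θ)).card : ℤ) ≤
      (a : ℤ) * ((Θ - e).toNat : ℤ) := by
    rw [htoNat]
    push_cast
    have h9 : T * ((E.filter (fun x => e ≤ x ∧ x < Θ)).card : ℤ) =
        ((τc : ℤ) + 1) * ((E.filter (fun x => e ≤ x ∧ x < Θ)).card : ℤ) := by rw [hTdef]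
    omega
  exact_mod_cast this

/-- Monotonicity of the SC property in the delay. -/
lemma isSC_mono {F : Type} [Zero F] {k n : ℕ} {C : PacketCode F k n} {A w w' : ℕ}
    (h : IsSC C A w) (hww : w ≤ w') : IsSC C A w' := by
  intro m m' hm hm' t ht E hE htE hcard hpast hun
  apply h m m' hm hm' t ht (E.filter (fun x => x ≤ t + w))
  · intro x hx
    rw [Finset.mem_filter] at hx
    exact ⟨(hE x hx.1).1, hx.2⟩
  · rw [Finset.mem_filter]
    exact ⟨htE, by omega⟩
  · exact le_trans (Finset.card_filter_le _ _) hcard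
  · exact hpast
  · intro t' h1 h2 h3
    have h4 : t' ∉ E := by
      intro hc
      exact h3 (by rw [Finset.mem_filter]; exact ⟨hc, h2⟩)
    exact hun t' h1 (by push_cast; omega) h4

/-- Core decoding lemma for the constructed code. -/
lemma core_decode
    (p a K τc : ℕ) (hp : p.Prime)
    (hpl : (a * K).factorial * (Bco a K) ^ (2 ^ ((τc+1) * a * (τc+1) * K)) < p)
    (ha : 0 < a) (hK : 0 < K) (hKa : K + a ≤ τc + 1)
    (w : ℕ) (hw : w ≤ τc)
    (m m' : ℤ → Fin K → ZMod p)
    (t Θ : ℤ) (E : Finset ℤ)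
    (hE : ∀ x ∈ E, t ≤ x ∧ x ≤ t + w) (htE : t ∈ E) (hcard : E.card ≤ a)
    (hΘ1 : t < Θ) (hΘ2 : Θ ≤ t + w + 1)
    (hHall : ∀ e ∈ E, e < Θ →
      (τc + 1) * ((E.filter (fun x => e ≤ x ∧ x < Θ)).card) ≤ a * (Θ - e).toNat)
    (hpast : ∀ t' < t, m t' = m' t')
    (hun : ∀ t', t ≤ t' → t' ≤ t + w → t' ∉ E →
      m t' = m' t' ∧ theParity p a K τc m t' = theParity p a K τc m' t') :
    m t = m' t := by
  classical
  haveI : Fact p.Prime := ⟨hp⟩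
  have hτc : 0 < τc := by omega
  set δ : ℤ → Fin K → ZMod p := fun s i => m s i - m' s i with hδ
  have hδpast : ∀ s, s < t → ∀ i, δ s i = 0 := by
    intro s hs i
    rw [hδ]; simp only; rw [hpast s hs]; ring
  have hδmsg : ∀ s, t ≤ s → s ≤ t + w → s ∉ E → ∀ i, δ s i = 0 := by
    intro s h1 h2 h3 i
    rw [hδ]; simp only; rw [(hun s h1 h2 h3).1]; ring
  have hδpar : ∀ s, t ≤ s → s ≤ t + w → s ∉ E → ∀ l, theParity p a K τc δ s l = 0 := by
    intro s h1 h2 h3 l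
    rw [hδ, theParity_sub, (hun s h1 h2 h3).2]; ring
  set kept : Finset ℤ := E.filter (fun x => x < Θ) with hkept
  have htk : t ∈ kept := by rw [hkept, Finset.mem_filter]; exact ⟨htE, hΘ1⟩
  have hkeptE : ∀ {x : ℤ}, x ∈ kept → x ∈ E := fun hx => (Finset.mem_filter.1 hx).1
  have hkeptΘ : ∀ {x : ℤ}, x ∈ kept → x < Θ := fun hx => (Finset.mem_filter.1 hx).2
  have hkcard : kept.card ≤ a := le_trans (Finset.card_filter_le _ _) hcard
  haveI hnel : Nonempty ({x : ℤ // x ∈ kept} × Fin K) := ⟨⟨⟨t, htk⟩, ⟨0, hK⟩⟩⟩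
  -- Hall matching
  set Rf : {x : ℤ // x ∈ kept} × Fin K → Finset (ℤ × Fin a) := fun c =>
    ((Finset.Ioo (c.1 : ℤ) Θ).filter (fun x => x ∉ E)) ×ˢ (Finset.univ : Finset (Fin a))
    with hRf
  have hUEr : ∀ e ∈ kept,
      ((Finset.Ioo e Θ).filter (fun x => x ∉ E)).card +
        (E.filter (fun x => e ≤ x ∧ x < Θ)).card = (Θ - e).toNat := by
    intro e he
    have h6 := Finset.card_filter_add_card_filter_not
      (s := Finset.Ico e Θ) (p := fun x => x ∈ E)
    have h7 : (Finset.Ico e Θ).filter (fun x => x ∈ E) =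
        E.filter (fun x => e ≤ x ∧ x < Θ) := by
      ext x
      simp only [Finset.mem_filter, Finset.mem_Ico]
      tauto
    have h8 : (Finset.Ico e Θ).filter (fun x => ¬ x ∈ E) =
        (Finset.Ioo e Θ).filter (fun x => x ∉ E) := by
      ext x
      simp only [Finset.mem_filter, Finset.mem_Ico, Finset.mem_Ioo]
      constructor
      · rintro ⟨⟨h1, h2⟩, h3⟩
        rcases eq_or_lt_of_le h1 with heq | h4
        · exact absurd (heq ▸ hkeptE he) h3
        · exact ⟨⟨h4, h2⟩, h3⟩
      · rintro ⟨⟨h1, h2⟩, h3⟩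
        exact ⟨⟨le_of_lt h1, h2⟩, h3⟩
    have h9 : (Finset.Ico e Θ).card = (Θ - e).toNat := Int.card_Ico e Θ
    rw [h7, h8, h9] at h6
    omega
  have hHallall : ∀ s : Finset ({x : ℤ // x ∈ kept} × Fin K),
      s.card ≤ (s.biUnion Rf).card := by
    intro s
    rcases s.eq_empty_or_nonempty with rfl | hsne
    · simp
    obtain ⟨cm, hcm, hmin⟩ := Finset.exists_min_image s (fun c => (c.1 : ℤ)) hsne
    have hemk : (cm.1 : ℤ) ∈ kept := cm.1.2
    have hemE : (cm.1 : ℤ) ∈ E := hkeptE hemk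
    have hemΘ : (cm.1 : ℤ) < Θ := hkeptΘ hemk
    have h2 : (Rf cm).card ≤ (s.biUnion Rf).card :=
      Finset.card_le_card (Finset.subset_biUnion_of_mem Rf hcm)
    have h3 : (Rf cm).card =
        ((Finset.Ioo ((cm.1 : ℤ)) Θ).filter (fun x => x ∉ E)).card * a := by
      rw [hRf]
      rw [Finset.card_product, Finset.card_univ, Fintype.card_fin]
    have h4 : s.card ≤ (E.filter (fun x => (cm.1 : ℤ) ≤ x ∧ x < Θ)).card * K := by
      have himg : s.card = (s.image (fun c => ((c.1 : ℤ), c.2))).card := by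
        rw [Finset.card_image_of_injOn]
        intro x _ y _ hxy
        rw [Prod.mk.injEq] at hxy
        exact Prod.ext (Subtype.ext hxy.1) hxy.2
      rw [himg]
      have hsub : s.image (fun c => ((c.1 : ℤ), c.2)) ⊆
          (E.filter (fun x => (cm.1 : ℤ) ≤ x ∧ x < Θ)) ×ˢ (Finset.univ : Finset (Fin K)) := by
        intro y hy
        obtain ⟨c, hc, rfl⟩ := Finset.mem_image.1 hy
        rw [Finset.mem_product, Finset.mem_filter]
        exact ⟨⟨hkeptE c.1.2, hmin c hc, hkeptΘ c.1.2⟩, Finset.mem_univ _⟩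
      calc (s.image (fun c => ((c.1 : ℤ), c.2))).card ≤ _ := Finset.card_le_card hsub
        _ = (E.filter (fun x => (cm.1 : ℤ) ≤ x ∧ x < Θ)).card * K := by
          rw [Finset.card_product, Finset.card_univ, Fintype.card_fin]
    have hHm := hHall _ hemE hemΘ
    have hcnt := hUEr _ hemk
    set Er := (E.filter (fun x => (cm.1 : ℤ) ≤ x ∧ x < Θ)).card with hEr
    set Uu := ((Finset.Ioo ((cm.1 : ℤ)) Θ).filter (fun x => x ∉ E)).card with hUu
    have e1 : (K + a) * Er ≤ (τc + 1) * Er := Nat.mul_le_mul_right Er hKa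
    have e2 : a * (Uu + Er) = a * (Θ - (cm.1 : ℤ)).toNat := by rw [hcnt]
    have e3 : (K + a) * Er = K * Er + a * Er := by ring
    have e4 : a * (Uu + Er) = a * Uu + a * Er := by ring
    have e5 : Er * K = K * Er := by ring
    have e6 : Uu * a = a * Uu := by ring
    omega
  obtain ⟨σf, hσinj, hσmem⟩ :=
    (Finset.all_card_le_biUnion_card_iff_exists_injective Rf).1 hHallall
  have hσ1 : ∀ c, (c.1 : ℤ) < (σf c).1 ∧ (σf c).1 < Θ ∧ (σf c).1 ∉ E := by
    intro c
    have hmem := hσmem c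
    rw [hRf, Finset.mem_product, Finset.mem_filter, Finset.mem_Ioo] at hmem
    exact ⟨hmem.1.1.1, hmem.1.1.2, hmem.1.2⟩
  have hcole : ∀ c : {x : ℤ // x ∈ kept} × Fin K, t ≤ (c.1 : ℤ) ∧ (c.1 : ℤ) ≤ t + w :=
    fun c => hE _ (hkeptE c.1.2)
  have hrowlo : ∀ c, t < (σf c).1 := fun c => lt_of_le_of_lt (hcole c).1 (hσ1 c).1
  have hrowhi : ∀ c, (σf c).1 ≤ t + w := fun c => by have := (hσ1 c).2.1; omega
  -- the matrix
  set lagF : ℤ → ℤ → Fin (τc + 1) := fun u e =>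
    ⟨(u - e - 1).toNat % (τc + 1), Nat.mod_lt _ (by omega)⟩ with hlagF
  have hlagval : ∀ (u e : ℤ), t ≤ e → e < u → u ≤ t + w →
      ((lagF u e) : ℕ) = (u - e - 1).toNat := by
    intro u e h1 h2 h3
    rw [hlagF]
    simp only
    apply Nat.mod_eq_of_lt
    omega
  set gfun : ({x : ℤ // x ∈ kept} × Fin K) × ({x : ℤ // x ∈ kept} × Fin K) → ℕ := fun x =>
    ivar (rhoT (τc + 1) (Nat.succ_pos τc) ((σf x.1).1), (σf x.1).2,
      lagF ((σf x.1).1) (x.2.1 : ℤ), x.2.2) with hgfun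
  set Mz : Matrix ({x : ℤ // x ∈ kept} × Fin K) ({x : ℤ // x ∈ kept} × Fin K) ℤ :=
    fun c c' => if (c'.1 : ℤ) < (σf c).1 then
      gamZ a K τc (rhoT (τc + 1) (Nat.succ_pos τc) ((σf c).1)) ((σf c).2)
        (lagF ((σf c).1) (c'.1 : ℤ)) c'.2 else 0
    with hMz
  have hginj : ∀ x y : ({x : ℤ // x ∈ kept} × Fin K) × ({x : ℤ // x ∈ kept} × Fin K),
      ((x.2.1 : ℤ) < (σf x.1).1) → ((y.2.1 : ℤ) < (σf y.1).1) → gfun x = gfun y → x = y := by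
    intro x y hx hy hgeq
    rw [hgfun] at hgeq
    have h0 := ivar_inj hgeq
    simp only [Prod.mk.injEq] at h0
    obtain ⟨hρ, hl, hlageq, hi⟩ := h0
    have huu : (σf x.1).1 = (σf y.1).1 := by
      apply rhoT_inj _ hρ
      have g1 := hrowlo x.1; have g2 := hrowhi x.1
      have g3 := hrowlo y.1; have g4 := hrowhi y.1
      rw [abs_lt]
      constructor <;> push_cast <;> omega
    have hσeq : σf x.1 = σf y.1 := Prod.ext huu hl
    have hc1 : x.1 = y.1 := hσinj hσeq
    have hex := hcole x.2
    have hey := hcole y.2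
    have lx := hlagval ((σf x.1).1) (x.2.1 : ℤ) hex.1 hx (hrowhi x.1)
    have ly := hlagval ((σf y.1).1) (y.2.1 : ℤ) hey.1 hy (hrowhi y.1)
    have hlagv := congrArg Fin.val hlageq
    rw [lx, ly] at hlagv
    have he : (x.2.1 : ℤ) = (y.2.1 : ℤ) := by
      rw [huu] at hx
      omega
    have hc2 : x.2 = y.2 := Prod.ext (Subtype.ext he) hi
    exact Prod.ext hc1 hc2
  have hdiag : ∀ c : {x : ℤ // x ∈ kept} × Fin K, ((c.1 : ℤ) < (σf c).1) :=
    fun c => (hσ1 c).1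
  have hcardκ : Fintype.card ({x : ℤ // x ∈ kept} × Fin K) = kept.card * K := by
    rw [Fintype.card_prod, Fintype.card_coe, Fintype.card_fin]
  have hcardle : Fintype.card ({x : ℤ // x ∈ kept} × Fin K) ≤ a * K := by
    rw [hcardκ]; exact Nat.mul_le_mul_right K hkcard
  have hBB : (Fintype.card ({x : ℤ // x ∈ kept} × Fin K)).factorial + 2 ≤ Bco a K := by
    rw [Bco]
    have := Nat.factorial_le hcardle
    omega
  have hgb : ∀ x, gfun x < (τc + 1) * a * (τc + 1) * K := fun x => by
    rw [hgfun]; exact ivar_lt _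
  obtain ⟨hdet0, hdetbd⟩ := det_dominant (Bco a K) ((τc + 1) * a * (τc + 1) * K) gfun
    (fun c c' => (c'.1 : ℤ) < (σf c).1) hginj hgb hBB hdiag Mz
    (fun c c' hs => by
      rw [hMz]
      simp only
      rw [if_pos hs, gamZ])
    (fun c c' hs => by
      rw [hMz]
      simp only
      rw [if_neg hs])
  -- determinant is nonzero modulo p
  set MF : Matrix ({x : ℤ // x ∈ kept} × Fin K) ({x : ℤ // x ∈ kept} × Fin K) (ZMod p) :=
    Mz.map (fun z => ((z : ℤ) : ZMod p)) with hMF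
  have hdetF : MF.det ≠ 0 := by
    have hmap : MF.det = ((Mz.det : ℤ) : ZMod p) :=
      (RingHom.map_det (Int.castRingHom (ZMod p)) Mz).symm
    rw [hmap]
    intro hc
    rw [ZMod.intCast_zmod_eq_zero_iff_dvd] at hc
    have h1 : (p : ℤ) ≤ |Mz.det| :=
      Int.le_of_dvd (abs_pos.2 hdet0) ((dvd_abs _ _).2 hc)
    have h2 : |Mz.det| ≤ ((a * K).factorial : ℤ) *
        (Bco a K : ℤ) ^ (2 ^ ((τc + 1) * a * (τc + 1) * K)) := by
      refine le_trans hdetbd ?_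
      apply mul_le_mul_of_nonneg_right _ (by positivity)
      exact_mod_cast Nat.factorial_le hcardle
    have h3 : ((a * K).factorial : ℤ) *
        (Bco a K : ℤ) ^ (2 ^ ((τc + 1) * a * (τc + 1) * K)) < (p : ℤ) := by
      exact_mod_cast hpl
    omega
  -- the linear system
  set xv : {x : ℤ // x ∈ kept} × Fin K → ZMod p := fun c' => δ (c'.1 : ℤ) c'.2 with hxv
  have hsys : MF.mulVec xv = 0 := by
    funext c
    have hu3 := (hσ1 c).2.2
    have hulo : t < (σf c).1 := hrowlo c
    have huhi : (σf c).1 ≤ t + w := hrowhi c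
    have hΘu : (σf c).1 < Θ := (hσ1 c).2.1
    have hpar0 : theParity p a K τc δ ((σf c).1)
        (Fin.cast (Nat.add_sub_cancel_left K a).symm ((σf c).2)) = 0 :=
      hδpar _ (le_of_lt hulo) huhi hu3 _
    set u : ℤ := (σf c).1 with hu
    set l : Fin a := (σf c).2 with hl
    set inner : ℤ → ZMod p := fun e => ∑ i : Fin K,
      ((gamZ a K τc (rhoT (τc + 1) (Nat.succ_pos τc) u) l (lagF u e) i : ℤ) : ZMod p) * δ e i
      with hinner
    have hstep1 : MF.mulVec xv c = ∑ e ∈ kept, (if e < u then inner e else 0) := by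
      simp only [Matrix.mulVec, dotProduct]
      rw [Fintype.sum_prod_type]
      rw [← Finset.sum_coe_sort kept (fun e => if e < u then inner e else 0)]
      apply Finset.sum_congr rfl
      intro es _
      by_cases hse : (es : ℤ) < u
      · rw [if_pos hse, hinner]
        simp only
        apply Finset.sum_congr rfl
        intro i _
        have hMval : MF c (es, i) =
            ((gamZ a K τc (rhoT (τc + 1) (Nat.succ_pos τc) u) l (lagF u (es : ℤ)) i : ℤ) :
              ZMod p) := by
          rw [hMF, Matrix.map_apply, hMz]
          simp only
          rw [← hu, ← hl, if_pos hse]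
        rw [hMval, hxv]
      · rw [if_neg hse]
        apply Finset.sum_eq_zero
        intro i _
        have hMval : MF c (es, i) = 0 := by
          rw [hMF, Matrix.map_apply, hMz]
          simp only
          rw [← hu, if_neg hse]
          exact Int.cast_zero
        rw [hMval, zero_mul]
    have hstep2 : (∑ e ∈ kept, (if e < u then inner e else 0)) =
        ∑ e ∈ kept.filter (fun e => e < u), inner e := (Finset.sum_filter _ _).symm
    have hstep3 : theParity p a K τc δ u
        (Fin.cast (Nat.add_sub_cancel_left K a).symm l) =
        ∑ e ∈ kept.filter (fun e => e < u), inner e := by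
      unfold theParity
      have hcastl : Fin.cast (Nat.add_sub_cancel_left K a)
          (Fin.cast (Nat.add_sub_cancel_left K a).symm l) = l := rfl
      rw [hcastl]
      rw [← Finset.sum_subset
        (Finset.filter_subset (fun d : Fin τc => (u - ((d : ℕ) + 1)) ∈ kept) Finset.univ)
        (by
          intro d _ hd
          rw [Finset.mem_filter] at hd
          push_neg at hd
          have hdk : (u - ((d : ℕ) + 1)) ∉ kept := hd (Finset.mem_univ d)
          apply Finset.sum_eq_zero
          intro i _
          have hzero : δ (u - ((d : ℕ) + 1)) i = 0 := by
            rcases lt_or_ge (u - ((d : ℕ) + 1)) t with hlt | hge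
            · exact hδpast _ hlt i
            · have hle : u - ((d : ℕ) + 1) ≤ t + w := by
                have hd0 : (0 : ℤ) ≤ ((d : ℕ) : ℤ) := by positivity
                omega
              by_cases hinE : (u - ((d : ℕ) + 1)) ∈ E
              · exfalso
                apply hdk
                rw [hkept, Finset.mem_filter]
                refine ⟨hinE, ?_⟩
                have hd0 : (0 : ℤ) ≤ ((d : ℕ) : ℤ) := by positivity
                omega
              · exact hδmsg _ hge hle hinE i
          rw [hzero, mul_zero])]
      apply Finset.sum_nbij' (i := fun d : Fin τc => u - ((d : ℕ) + 1))
        (j := fun e : ℤ => (⟨(u - e - 1).toNat % τc, Nat.mod_lt _ hτc⟩ : Fin τc))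
      · intro d hd
        rw [Finset.mem_filter] at hd
        rw [Finset.mem_filter]
        refine ⟨hd.2, by
          have hd0 : (0 : ℤ) ≤ ((d : ℕ) : ℤ) := by positivity
          omega⟩
      · intro e he
        rw [Finset.mem_filter] at he
        obtain ⟨hek, heu⟩ := he
        have het : t ≤ e := (hE _ (hkeptE hek)).1
        have hd1 : (u - e - 1).toNat < τc := by omega
        rw [Finset.mem_filter]
        refine ⟨Finset.mem_univ _, ?_⟩
        have hval : (((⟨(u - e - 1).toNat % τc, Nat.mod_lt _ hτc⟩ : Fin τc)) : ℕ) =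
            (u - e - 1).toNat := Nat.mod_eq_of_lt hd1
        have heq : u - ((((⟨(u - e - 1).toNat % τc, Nat.mod_lt _ hτc⟩ : Fin τc)) : ℕ) + 1 : ℤ)
            = e := by
          rw [hval]
          have h2 : ((u - e - 1).toNat : ℤ) = u - e - 1 := Int.toNat_of_nonneg (by omega)
          omega
        rw [heq]
        exact hek
      · intro d hd
        apply Fin.ext
        have h1 : u - (u - ((d : ℕ) + 1)) - 1 = ((d : ℕ) : ℤ) := by ring
        rw [h1]
        simp only [Int.toNat_natCast]
        exact Nat.mod_eq_of_lt d.isLt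
      · intro e he
        rw [Finset.mem_filter] at he
        obtain ⟨hek, heu⟩ := he
        have het : t ≤ e := (hE _ (hkeptE hek)).1
        have hd1 : (u - e - 1).toNat < τc := by omega
        have hval : (((⟨(u - e - 1).toNat % τc, Nat.mod_lt _ hτc⟩ : Fin τc)) : ℕ) =
            (u - e - 1).toNat := Nat.mod_eq_of_lt hd1
        rw [hval]
        have h2 : ((u - e - 1).toNat : ℤ) = u - e - 1 := Int.toNat_of_nonneg (by omega)
        omega
      · intro d hd
        rw [Finset.mem_filter] at hd
        rw [hinner]
        simp only
        apply Finset.sum_congr rfl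
        intro i _
        have het : t ≤ u - ((d : ℕ) + 1) := (hE _ (hkeptE hd.2)).1
        have hlt2 : u - ((d : ℕ) + 1) < u := by
          have hd0 : (0 : ℤ) ≤ ((d : ℕ) : ℤ) := by positivity
          omega
        have hval := hlagval u (u - ((d : ℕ) + 1)) het hlt2 huhi
        have hfin : Fin.castLE (Nat.le_succ τc) d = lagF u (u - ((d : ℕ) + 1)) := by
          apply Fin.ext
          rw [hval]
          have h1 : u - (u - ((d : ℕ) + 1)) - 1 = ((d : ℕ) : ℤ) := by ring
          rw [h1, Int.toNat_natCast]
          rfl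
        rw [hfin]
    have hfinal : MF.mulVec xv c = 0 := by
      rw [hstep1, hstep2, ← hstep3, hpar0]
    simpa using hfinal
  -- conclude that the unknowns vanish
  have hxv0 : xv = 0 := by
    have hunit : IsUnit MF.det := isUnit_iff_ne_zero.2 hdetF
    calc xv = (1 : Matrix _ _ (ZMod p)).mulVec xv := (Matrix.one_mulVec xv).symm
      _ = (MF⁻¹ * MF).mulVec xv := by rw [Matrix.nonsing_inv_mul MF hunit]
      _ = MF⁻¹.mulVec (MF.mulVec xv) := (Matrix.mulVec_mulVec xv MF⁻¹ MF).symm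
      _ = 0 := by rw [hsys, Matrix.mulVec_zero]
  funext i
  have hzero := congrFun hxv0 (⟨⟨t, htk⟩, i⟩ : {x : ℤ // x ∈ kept} × Fin K)
  rw [hxv] at hzero
  simp only [Pi.zero_apply] at hzero
  have hzz : m t i - m' t i = 0 := hzero
  exact sub_eq_zero.1 hzz

lemma theCode_SC_main (p a K τc : ℕ) (hp : p.Prime)
    (hpl : (a * K).factorial * (Bco a K) ^ (2 ^ ((τc + 1) * a * (τc + 1) * K)) < p)
    (ha : 0 < a) (hK : 0 < K) (hKa : K + a ≤ τc + 1) :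
    IsSC (theCode p a K τc) a τc := by
  intro m m' hm hm' t ht E hE htE hcard hpast hun
  obtain ⟨Θ, h1, h2, h3⟩ := exists_cut a τc ha t E hE hcard
  exact core_decode p a K τc hp hpl ha hK hKa τc (le_refl τc) m m' t Θ E hE htE hcard
    h1 h2 h3 hpast hun

lemma theCode_SC_local (p a K τc r : ℕ) (hp : p.Prime)
    (hpl : (a * K).factorial * (Bco a K) ^ (2 ^ ((τc + 1) * a * (τc + 1) * K)) < p)
    (ha : 0 < a) (hK : 0 < K) (hKa : K + a ≤ τc + 1)
    (hrτ : r ≤ τc) (hloc : τc + 1 ≤ a * (r + 1)) :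
    IsSC (theCode p a K τc) 1 r := by
  intro m m' hm hm' t ht E hE htE hcard hpast hun
  have hEt : E = {t} := by
    apply Finset.eq_singleton_iff_unique_mem.2
    exact ⟨htE, fun x hx => Finset.card_le_one.1 hcard x hx t htE⟩
  refine core_decode p a K τc hp hpl ha hK hKa r hrτ m m' t (t + r + 1) E hE htE
    (le_trans hcard (by omega)) (by omega) (by omega) ?_ hpast hun
  intro e heE heΘ
  have hx : e = t := by rw [hEt] at heE; exact Finset.mem_singleton.1 heE
  have hfilter : E.filter (fun x => e ≤ x ∧ x < t + r + 1) = {t} := by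
    rw [hEt]
    ext x
    simp only [Finset.mem_filter, Finset.mem_singleton]
    constructor
    · rintro ⟨h1, _⟩; exact h1
    · rintro rfl
      refine ⟨rfl, ?_, ?_⟩
      · omega
      · omega
  rw [hfilter, Finset.card_singleton]
  have htn : (t + (r : ℤ) + 1 - e).toNat = r + 1 := by omega
  rw [htn]
  omega

lemma achieve (a τ r : ℕ) (ha : 1 < a) (haτ : a ≤ τ) (hr : 1 ≤ r) (hrτ : r < τ) :
    ∃ (F : Type) (_ : Field F) (_ : Fintype F) (k n : ℕ) (C : PacketCode F k n),
      1 ≤ k ∧ k < n ∧ IsLRSC C a τ r ∧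
      (k : ℚ) / n = min (((τ : ℚ) + 1 - a) / ((τ : ℚ) + 1)) ((r : ℚ) / ((r : ℚ) + 1)) := by
  have har2 : 2 * a ≤ a * (r + 1) := by nlinarith
  have har2' : 2 * (r + 1) ≤ a * (r + 1) := by nlinarith
  set τc : ℕ := min τ (a * (r + 1) - 1) with hτcdef
  set K : ℕ := τc + 1 - a with hKdef
  have hτcτ : τc ≤ τ := min_le_left _ _
  have hτcr : τc ≤ a * (r + 1) - 1 := min_le_right _ _
  have haτc : a ≤ τc := le_min haτ (by omega)
  have hrτc : r ≤ τc := le_min (by omega) (by omega)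
  have hK1 : 1 ≤ K := by omega
  have hKa : K + a = τc + 1 := by omega
  have hτcloc : τc + 1 ≤ a * (r + 1) := by omega
  obtain ⟨p, hple, hp⟩ := Nat.exists_infinite_primes
    ((a * K).factorial * (Bco a K) ^ (2 ^ ((τc + 1) * a * (τc + 1) * K)) + 1)
  haveI : Fact p.Prime := ⟨hp⟩
  haveI : NeZero p := ⟨hp.ne_zero⟩
  have hpl : (a * K).factorial * (Bco a K) ^ (2 ^ ((τc + 1) * a * (τc + 1) * K)) < p := by
    omega
  refine ⟨ZMod p, inferInstance, inferInstance, K, K + a, theCode p a K τc, hK1, by omega,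
    ⟨?_, ?_⟩, ?_⟩
  · exact isSC_mono
      (theCode_SC_main p a K τc hp hpl (by omega) (by omega) (by omega)) hτcτ
  · exact theCode_SC_local p a K τc r hp hpl (by omega) (by omega) (by omega) hrτc hτcloc
  · -- the rate is exactly the min
    have ha0 : (0 : ℚ) < (a : ℚ) := by exact_mod_cast (by omega : 0 < a)
    have hr0 : (0 : ℚ) < (r : ℚ) + 1 := by positivity
    have hτ0 : (0 : ℚ) < (τ : ℚ) + 1 := by positivity
    have hτc0 : (0 : ℚ) < (τc : ℚ) + 1 := by positivity
    have hKQ : (K : ℚ) = (τc : ℚ) + 1 - (a : ℚ) := by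
      have : (K : ℚ) + (a : ℚ) = (τc : ℚ) + 1 := by exact_mod_cast hKa
      linarith
    have hKaQ : ((K + a : ℕ) : ℚ) = (τc : ℚ) + 1 := by exact_mod_cast hKa
    rw [hKaQ, hKQ]
    rcases le_total τ (a * (r + 1) - 1) with hcase | hcase
    · -- τc = τ, the first term is the min
      have hτceq : τc = τ := by omega
      have hle : ((τ : ℚ) + 1 - a) / ((τ : ℚ) + 1) ≤ (r : ℚ) / ((r : ℚ) + 1) := by
        rw [div_le_div_iff₀ hτ0 hr0]
        have hnat : τ + 1 ≤ a * (r + 1) := by omega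
        have hQ : (τ : ℚ) + 1 ≤ (a : ℚ) * ((r : ℚ) + 1) := by exact_mod_cast hnat
        nlinarith
      rw [min_eq_left hle, hτceq]
    · -- τc = a (r+1) - 1, the second term is the min
      have hτceq : τc + 1 = a * (r + 1) := by omega
      have hle : (r : ℚ) / ((r : ℚ) + 1) ≤ ((τ : ℚ) + 1 - a) / ((τ : ℚ) + 1) := by
        rw [div_le_div_iff₀ hr0 hτ0]
        have hnat : a * (r + 1) ≤ τ + 1 := by omega
        have hQ : (a : ℚ) * ((r : ℚ) + 1) ≤ (τ : ℚ) + 1 := by exact_mod_cast hnat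
        nlinarith
      rw [min_eq_right hle]
      have hτcQ : (τc : ℚ) + 1 = (a : ℚ) * ((r : ℚ) + 1) := by exact_mod_cast hτceq
      rw [hτcQ]
      have hnum : (a : ℚ) * ((r : ℚ) + 1) - (a : ℚ) = (a : ℚ) * (r : ℚ) := by ring
      rw [hnum]
      rw [mul_div_mul_left _ _ (ne_of_gt ha0)]


end LRSCAux


/-- The optimal rate of an `(a,τ,r)` LRSC is `min{(τ+1-a)/(τ+1), r/(r+1)}`:
every LRSC obeys this rate bound, and it is achieved by some LRSC over some
finite field. -/
theorem optimal_rate_LRSC (a τ r : ℕ) (ha : 1 < a) (haτ : a ≤ τ) (hr : 1 ≤ r)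
    (hrτ : r < τ) :
    (∀ (F : Type) [Field F] [Fintype F] (k n : ℕ) (C : PacketCode F k n),
        1 ≤ k → k < n → IsLRSC C a τ r →
        (k : ℚ) / n ≤ min (((τ : ℚ) + 1 - a) / ((τ : ℚ) + 1)) ((r : ℚ) / ((r : ℚ) + 1))) ∧
    (∃ (F : Type) (_ : Field F) (_ : Fintype F) (k n : ℕ) (C : PacketCode F k n),
        1 ≤ k ∧ k < n ∧ IsLRSC C a τ r ∧
        (k : ℚ) / n = min (((τ : ℚ) + 1 - a) / ((τ : ℚ) + 1)) ((r : ℚ) / ((r : ℚ) + 1))) := by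
  constructor
  · intro F _ _ k n C hk hkn hlrsc
    refine le_min ?_ ?_
    · exact LRSCAux.sc_rate_bound C (by omega) (by omega) hlrsc.1 hk hkn
    · have := LRSCAux.sc_rate_bound C (le_refl 1) (by omega) hlrsc.2 hk hkn
      simpa using this
  · exact LRSCAux.achieve a τ r ha haτ hr hrτ
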